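/- Fix j ≥ 1 and an integer n ≥ 1, and suppose λ is a real number with −b_{j+1} < λ < −μ_j and λ + n² K(λ) = 0. Then there exists λ′ with λ < λ′ < −μ_j and λ′ + (n+1)² K(λ′) = 0; that is, G_{n+1} has a zero strictly between λ and −μ_j. -/

import Mathlib

open Filter Topology

/- Indexing convention: the paper's sequences `(a_k)_{k ≥ 1}`, `(b_k)_{k ≥ 1}` are
encoded as functions `a b : ℕ → ℝ`, where index `k : ℕ` corresponds to the paper's
index `k + 1` (so `b 0 = b_1`, etc.). -/

/-- `GPK a b z = K(z) = ∑ a_k / (z + b_k)`. -/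
noncomputable def GPK (a b : ℕ → ℝ) (z : ℂ) : ℂ := ∑' k : ℕ, (a k : ℂ) / (z + (b k : ℂ))

/-- `GPG a b n z = G_n(z) = z + n² K(z)`. -/
noncomputable def GPG (a b : ℕ → ℝ) (n : ℕ) (z : ℂ) : ℂ := z + (n : ℂ) ^ 2 * GPK a b z

/-- The real version of `K`. -/
noncomputable def GPKr (a b : ℕ → ℝ) (x : ℝ) : ℝ := ∑' k : ℕ, a k / (x + b k)

lemma GPK_ofReal (a b : ℕ → ℝ) (x : ℝ) : GPK a b (x : ℂ) = (GPKr a b x : ℂ) := by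
  rw [GPK, GPKr, Complex.ofReal_tsum]
  push_cast
  rfl

/-- If `λ ∈ (-b_{j+1}, -μ_j)` is a zero of `G_n`, then `G_{n+1}` has a zero
strictly between `λ` and `-μ_j`. -/
theorem real_zero_increases
    (a b : ℕ → ℝ) (α : ℝ)
    (ha : ∀ k, 0 < a k) (hα : 0 < α) (hsum : HasSum a (α ^ 2))
    (hb0 : 0 ≤ b 0) (hbmono : StrictMono b) (hbtop : Tendsto b atTop atTop)
    (μ : ℕ → ℝ)
    (hμ : ∀ j, b j < μ j ∧ μ j < b (j + 1) ∧ GPK a b (-(μ j : ℂ)) = 0)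
    (j : ℕ) (n : ℕ) (hn : 1 ≤ n)
    (lam : ℝ) (h1 : -(b (j + 1)) < lam) (h2 : lam < -(μ j))
    (hzero : (lam : ℂ) + (n : ℂ) ^ 2 * GPK a b (lam : ℂ) = 0) :
    ∃ lam' : ℝ, lam < lam' ∧ lam' < -(μ j) ∧
      (lam' : ℂ) + ((n : ℂ) + 1) ^ 2 * GPK a b (lam' : ℂ) = 0 := by
  obtain ⟨hbμ, hμb, hKμ⟩ := hμ j
  set ε : ℝ := min (μ j - b j) (lam + b (j + 1)) with hε
  have hεpos : 0 < ε := lt_min (by linarith) (by linarith)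
  -- lower bound on |x + b k| for x in the interval
  have hbound : ∀ x ∈ Set.Icc lam (-(μ j)), ∀ k, ε ≤ |x + b k| := by
    intro x hx k
    rcases le_or_gt k j with hk | hk
    · have hbk : b k ≤ b j := hbmono.monotone hk
      have : x + b k ≤ -(μ j - b j) := by
        have := hx.2; linarith
      calc ε ≤ μ j - b j := min_le_left _ _
        _ ≤ |x + b k| := by
          rw [abs_of_nonpos (by linarith)]; linarith
    · have hbk : b (j + 1) ≤ b k := hbmono.monotone hk
      have : lam + b (j + 1) ≤ x + b k := by
        have := hx.1; linarith
      calc ε ≤ lam + b (j + 1) := min_le_right _ _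
        _ ≤ |x + b k| := le_trans this (le_abs_self _)
  have hsummable : ∀ x ∈ Set.Icc lam (-(μ j)), Summable (fun k => a k / (x + b k)) := by
    intro x hx
    apply Summable.of_norm_bounded (g := fun k => a k / ε) (hsum.summable.div_const ε)
    intro k
    rw [Real.norm_eq_abs, abs_div, abs_of_pos (ha k)]
    exact div_le_div_of_nonneg_left (ha k).le hεpos (hbound x hx k)
  -- continuity
  have hcont : ContinuousOn (fun x => x + ((n : ℝ) + 1) ^ 2 * GPKr a b x)
      (Set.Icc lam (-(μ j))) := by
    apply ContinuousOn.add continuousOn_id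
    apply ContinuousOn.mul continuousOn_const
    apply continuousOn_tsum (u := fun k => a k / ε)
      _ (hsum.summable.div_const ε)
    · intro k x hx
      rw [Real.norm_eq_abs, abs_div, abs_of_pos (ha k)]
      exact div_le_div_of_nonneg_left (ha k).le hεpos (hbound x hx k)
    · intro k
      apply ContinuousOn.div continuousOn_const (by fun_prop)
      intro x hx
      have := hbound x hx k
      intro h
      rw [h, abs_zero] at this
      linarith
  set g : ℝ → ℝ := fun x => x + ((n : ℝ) + 1) ^ 2 * GPKr a b x with hg
  -- values at endpoints
  have hlam0 : lam < 0 := by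
    have : (0:ℝ) ≤ b j := le_trans hb0 (hbmono.monotone (Nat.zero_le j))
    linarith
  have hKlam : GPKr a b lam = -lam / (n : ℝ) ^ 2 := by
    have h := hzero
    rw [GPK_ofReal] at h
    have h' : lam + (n : ℝ) ^ 2 * GPKr a b lam = 0 := by exact_mod_cast h
    have hn0 : (0:ℝ) < (n : ℝ) ^ 2 := by positivity
    field_simp
    linarith
  have hglam : 0 < g lam := by
    rw [hg]
    simp only [hKlam]
    have hn0 : (0:ℝ) < (n : ℝ) ^ 2 := by positivity
    have hnn : (1:ℝ) ≤ (n : ℝ) := by exact_mod_cast hn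
    have hnum : 0 < (-lam) * (((n:ℝ)+1)^2 - (n:ℝ)^2) := by nlinarith
    have heq : lam + ((n:ℝ)+1)^2 * (-lam/(n:ℝ)^2)
        = (-lam) * (((n:ℝ)+1)^2 - (n:ℝ)^2) / (n:ℝ)^2 := by field_simp; ring
    rw [heq]; exact div_pos hnum hn0
  have hKμr : GPKr a b (-(μ j)) = 0 := by
    have h := hKμ
    rw [show (-(μ j : ℂ)) = ((-(μ j) : ℝ) : ℂ) by push_cast; ring] at h
    rw [GPK_ofReal] at h
    exact_mod_cast h
  have hgμ : g (-(μ j)) < 0 := by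
    rw [hg]; simp only [hKμr, mul_zero, add_zero]
    have : (0:ℝ) < μ j := lt_of_le_of_lt (le_trans hb0 (hbmono.monotone (Nat.zero_le j))) hbμ
    linarith
  -- IVT
  have h0mem : (0:ℝ) ∈ Set.Ioo (g (-(μ j))) (g lam) := ⟨hgμ, hglam⟩
  have := intermediate_value_Ioo' (le_of_lt h2) hcont h0mem
  obtain ⟨lam', hlam'mem, hlam'0⟩ := this
  refine ⟨lam', hlam'mem.1, hlam'mem.2, ?_⟩
  rw [GPK_ofReal]
  have hval : lam' + ((n : ℝ) + 1) ^ 2 * GPKr a b lam' = 0 := hlam'0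
  have h3 : (((lam' + ((n : ℝ) + 1) ^ 2 * GPKr a b lam') : ℝ) : ℂ) = 0 := by
    rw [hval]; norm_num
  push_cast at h3
  exact_mod_cast h3
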